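/- Let f : ℝ^d → ℝ^d satisfy f(0) = 0 and be differentiable at 0 with derivative B (so f(x) = Bx + o(‖x‖)), and let V : ℝ^d → ℝ be twice continuously differentiable with V(0) = 0, dV(0) = 0 and positive definite Hessian H at the origin. If V is a weak Lyapunov function for f, i.e. dV(x)·f(x) ≤ 0 for all x ∈ ℝ^d, then the quadratic function x ↦ ‖x‖_H² = ½ xᵀHx is a weak Lyapunov function for the linearization B, i.e. xᵀHBx ≤ 0 for all x ∈ ℝ^d. -/

import Mathlib

open Matrix
set_option maxHeartbeats 1000000

/-- Let `f(0) = 0` with derivative `B` at the origin, and let `V`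
be `C²` with `V(0) = 0`, `dV(0) = 0` and positive definite Hessian `H` at the
origin. If `V` is a weak Lyapunov function for `f` (`dV(x)·f(x) ≤ 0` everywhere),
then `x ↦ ½ xᵀHx` is a weak Lyapunov function for the linearization `B`:
`xᵀHBx ≤ 0` for all `x`. -/
theorem hessian_quadratic_is_weak_lyapunov_for_linearization
    (d : ℕ) (f : (Fin d → ℝ) → (Fin d → ℝ))
    (hf0 : f 0 = 0)
    -- f is differentiable at 0 with derivative B
    (B : (Fin d → ℝ) →L[ℝ] (Fin d → ℝ))
    (hfB : HasFDerivAt f B 0)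
    (V : (Fin d → ℝ) → ℝ)
    (hV : ContDiff ℝ 2 V)
    (hV0 : V 0 = 0)
    (hdV0 : fderiv ℝ V 0 = 0)
    (H : Matrix (Fin d) (Fin d) ℝ) (hHpos : H.PosDef)
    -- H is the Hessian of V at the origin
    (hHess : ∀ x y : Fin d → ℝ, (iteratedFDeriv ℝ 2 V 0) ![x, y] = x ⬝ᵥ H.mulVec y)
    -- V is a weak Lyapunov function for f
    (hLyap : ∀ x : Fin d → ℝ, fderiv ℝ V x (f x) ≤ 0) :
    ∀ x : Fin d → ℝ, x ⬝ᵥ H.mulVec (B x) ≤ 0 := by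
  intro x
  set Φ : (Fin d → ℝ) → ((Fin d → ℝ) →L[ℝ] ℝ) := fderiv ℝ V with hΦ
  set L : (Fin d → ℝ) →L[ℝ] ((Fin d → ℝ) →L[ℝ] ℝ) := fderiv ℝ Φ 0 with hL
  -- Φ is differentiable at 0
  have hΦdiff : ContDiff ℝ 1 Φ := hV.fderiv_right (m := 1) (by norm_num)
  have hΦd : HasFDerivAt Φ L 0 :=
    (hΦdiff.differentiable one_ne_zero 0).hasFDerivAt
  -- the curve t ↦ t • x
  have hc : HasDerivAt (fun t : ℝ => t • x) x 0 := by
    simpa using (hasDerivAt_id (0 : ℝ)).smul_const x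
  -- composition derivatives along the curve
  have hΦc : HasDerivAt (fun t : ℝ => Φ (t • x)) (L x) 0 := by
    exact (zero_smul ℝ x ▸ hΦd : HasFDerivAt Φ L ((0:ℝ) • x)).comp_hasDerivAt 0 hc
  have hfc : HasDerivAt (fun t : ℝ => f (t • x)) (B x) 0 := by
    exact (zero_smul ℝ x ▸ hfB : HasFDerivAt f B ((0:ℝ) • x)).comp_hasDerivAt 0 hc
  -- slopes tend to the derivatives
  have hΦ0 : Φ 0 = 0 := hdV0
  have tg : Filter.Tendsto (fun t : ℝ => t⁻¹ • Φ (t • x)) (nhdsWithin 0 {(0:ℝ)}ᶜ)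
      (nhds (L x)) := by
    have := hasDerivAt_iff_tendsto_slope.1 hΦc
    refine this.congr (fun t => ?_)
    simp [slope, hΦ0]
  have th : Filter.Tendsto (fun t : ℝ => t⁻¹ • f (t • x)) (nhdsWithin 0 {(0:ℝ)}ᶜ)
      (nhds (B x)) := by
    have := hasDerivAt_iff_tendsto_slope.1 hfc
    refine this.congr (fun t => ?_)
    simp [slope, hf0]
  -- evaluation is continuous bilinear
  have tev : Filter.Tendsto (fun t : ℝ => (t⁻¹ • Φ (t • x)) (t⁻¹ • f (t • x)))
      (nhdsWithin 0 {(0:ℝ)}ᶜ) (nhds (L x (B x))) := by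
    have hcont : Continuous fun p : (((Fin d → ℝ) →L[ℝ] ℝ) × (Fin d → ℝ)) => p.1 p.2 :=
      isBoundedBilinearMap_apply.continuous
    exact (hcont.tendsto (L x, B x)).comp (tg.prodMk_nhds th)
  -- each term is ≤ 0
  have hle : L x (B x) ≤ 0 := by
    refine le_of_tendsto tev ?_
    filter_upwards [self_mem_nhdsWithin] with t ht
    have ht' : (t : ℝ) ≠ 0 := ht
    have : (t⁻¹ • Φ (t • x)) (t⁻¹ • f (t • x))
        = (t⁻¹ * t⁻¹) * Φ (t • x) (f (t • x)) := by
      simp [mul_comm, mul_assoc, smul_eq_mul]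
    rw [this]
    have h1 : Φ (t • x) (f (t • x)) ≤ 0 := hLyap (t • x)
    have h2 : 0 ≤ t⁻¹ * t⁻¹ := mul_self_nonneg _
    exact mul_nonpos_of_nonneg_of_nonpos h2 h1
  -- identify L x (B x) with the Hessian quadratic form
  have hid : x ⬝ᵥ H.mulVec (B x) = L x (B x) := by
    rw [← hHess x (B x), iteratedFDeriv_two_apply]
    simp [hL, hΦ]
  rw [hid]
  exact hle
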